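/- Let a, b, c be nonzero integers with gcd(a, b, c) = 1. Then X, Y ∈ M₂(ℤ) satisfy aX² + bY² = cI and XY ≠ YX if and only if X = [[t₁, t₂],[t₃, −t₁]] and Y = [[s₁, s₂],[s₃, −s₁]] for some integers t₁, t₂, t₃, s₁, s₂, s₃ such that a(t₁² + t₂t₃) + b(s₁² + s₂s₃) = c and the vectors (t₁, t₂, t₃) and (s₁, s₂, s₃) in ℚ³ are linearly independent over ℚ. -/

import Mathlib

lemma pair_li_iff (u v : Fin 3 → ℚ) :
    LinearIndependent ℚ ![u, v] ↔ ∃ i j : Fin 3, u i * v j - u j * v i ≠ 0 := by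
  rw [LinearIndependent.pair_iff]
  constructor
  · intro h
    by_contra hm
    push_neg at hm
    by_cases hu : u = 0
    · have h10 := (h 1 0 (by simp [hu])).1
      norm_num at h10
    · obtain ⟨k, hk⟩ := Function.ne_iff.mp hu
      simp only [Pi.zero_apply] at hk
      have h2 := (h (v k) (-(u k)) (by
        funext i
        have hki := hm k i
        simp only [Pi.add_apply, Pi.smul_apply, smul_eq_mul, Pi.zero_apply]
        linear_combination -hki)).2
      exact hk (by linarith [neg_eq_zero.mp h2])
  · rintro ⟨i, j, hij⟩ s t hst
    have hi := congrFun hst i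
    have hj := congrFun hst j
    simp only [Pi.add_apply, Pi.smul_apply, smul_eq_mul, Pi.zero_apply] at hi hj
    have hs : s = 0 := by
      have h0 : s * (u i * v j - u j * v i) = 0 := by linear_combination v j * hi - v i * hj
      rcases mul_eq_zero.mp h0 with h | h
      · exact h
      · exact absurd h hij
    refine ⟨hs, ?_⟩
    subst hs
    simp only [zero_mul, zero_add] at hi hj
    by_contra ht
    rcases mul_eq_zero.mp hi with h | hvi
    · exact ht h
    rcases mul_eq_zero.mp hj with h | hvj
    · exact ht h
    apply hij; rw [hvi, hvj]; ring

lemma key_pq (a b p q u1 u2 v1 v2 : ℤ) (ha : a ≠ 0) (hb : b ≠ 0)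
    (h1 : a * u1 * p + b * v1 * q = 0) (h2 : a * u2 * p + b * v2 * q = 0)
    (hC : u1 * v2 - u2 * v1 ≠ 0) : p = 0 ∧ q = 0 := by
  have hap : a * p * (u1 * v2 - u2 * v1) = 0 := by linear_combination v2 * h1 - v1 * h2
  have hbq : b * q * (u1 * v2 - u2 * v1) = 0 := by linear_combination u1 * h2 - u2 * h1
  constructor
  · rcases mul_eq_zero.mp hap with h | h
    · rcases mul_eq_zero.mp h with h' | h'
      · exact absurd h' ha
      · exact h'
    · exact absurd h hC
  · rcases mul_eq_zero.mp hbq with h | h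
    · rcases mul_eq_zero.mp h with h' | h'
      · exact absurd h' hb
      · exact h'
    · exact absurd h hC

lemma fin3_mk_two (h : 2 < 3) : (⟨2, h⟩ : Fin 3) = 2 := rfl

theorem stmt_4 (a b c : ℤ) (ha : a ≠ 0) (hb : b ≠ 0) (hc : c ≠ 0)
    (hgcd : Int.gcd a (Int.gcd b c) = 1) (X Y : Matrix (Fin 2) (Fin 2) ℤ) :
    (a • X ^ 2 + b • Y ^ 2 = c • (1 : Matrix (Fin 2) (Fin 2) ℤ) ∧ X * Y ≠ Y * X) ↔
    (∃ t₁ t₂ t₃ s₁ s₂ s₃ : ℤ,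
      X = !![t₁, t₂; t₃, -t₁] ∧ Y = !![s₁, s₂; s₃, -s₁] ∧
      a * (t₁ ^ 2 + t₂ * t₃) + b * (s₁ ^ 2 + s₂ * s₃) = c ∧
      LinearIndependent ℚ
        ![![(t₁ : ℚ), (t₂ : ℚ), (t₃ : ℚ)], ![(s₁ : ℚ), (s₂ : ℚ), (s₃ : ℚ)]]) := by
  constructor
  · rintro ⟨h1, h2⟩
    have e00 := congrFun (congrFun h1 0) 0
    have e01 := congrFun (congrFun h1 0) 1
    have e10 := congrFun (congrFun h1 1) 0
    have e11 := congrFun (congrFun h1 1) 1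
    simp only [Matrix.add_apply, Matrix.smul_apply, smul_eq_mul, pow_two,
      Matrix.mul_apply, Fin.sum_univ_two, Matrix.one_apply] at e00 e01 e10 e11
    norm_num at e00 e01 e10 e11
    have E01 : a * (X 0 1) * (X 0 0 + X 1 1) + b * (Y 0 1) * (Y 0 0 + Y 1 1) = 0 := by
      linear_combination e01
    have E10 : a * (X 1 0) * (X 0 0 + X 1 1) + b * (Y 1 0) * (Y 0 0 + Y 1 1) = 0 := by
      linear_combination e10
    have Ed : a * (X 0 0 - X 1 1) * (X 0 0 + X 1 1)
        + b * (Y 0 0 - Y 1 1) * (Y 0 0 + Y 1 1) = 0 := by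
      linear_combination e00 - e11
    rw [Ne, ← Matrix.ext_iff] at h2
    push_neg at h2
    obtain ⟨i, j, hij⟩ := h2
    simp only [Matrix.mul_apply, Fin.sum_univ_two] at hij
    have hKey : (X 0 0 + X 1 1 = 0) ∧ (Y 0 0 + Y 1 1 = 0) ∧
        (X 0 1 * Y 1 0 - X 1 0 * Y 0 1 ≠ 0 ∨ X 0 0 * Y 0 1 - X 0 1 * Y 0 0 ≠ 0 ∨
         X 0 0 * Y 1 0 - X 1 0 * Y 0 0 ≠ 0) := by
      fin_cases i <;> fin_cases j <;> simp only [Fin.mk_zero, Fin.mk_one] at hij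
      · have hC : X 0 1 * Y 1 0 - X 1 0 * Y 0 1 ≠ 0 :=
          fun h => hij (by linear_combination h)
        obtain ⟨hp, hq⟩ := key_pq a b _ _ _ _ _ _ ha hb E01 E10 hC
        exact ⟨hp, hq, Or.inl hC⟩
      · have hC : X 0 1 * (Y 0 0 - Y 1 1) - (X 0 0 - X 1 1) * Y 0 1 ≠ 0 :=
          fun h => hij (by linear_combination -h)
        obtain ⟨hp, hq⟩ := key_pq a b _ _ _ _ _ _ ha hb E01 Ed hC
        refine ⟨hp, hq, Or.inr (Or.inl fun h => hC ?_)⟩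
        linear_combination -2 * h - X 0 1 * hq + Y 0 1 * hp
      · have hC : X 1 0 * (Y 0 0 - Y 1 1) - (X 0 0 - X 1 1) * Y 1 0 ≠ 0 :=
          fun h => hij (by linear_combination h)
        obtain ⟨hp, hq⟩ := key_pq a b _ _ _ _ _ _ ha hb E10 Ed hC
        refine ⟨hp, hq, Or.inr (Or.inr fun h => hC ?_)⟩
        linear_combination -2 * h - X 1 0 * hq + Y 1 0 * hp
      · have hC : X 0 1 * Y 1 0 - X 1 0 * Y 0 1 ≠ 0 :=
          fun h => hij (by linear_combination -h)
        obtain ⟨hp, hq⟩ := key_pq a b _ _ _ _ _ _ ha hb E01 E10 hC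
        exact ⟨hp, hq, Or.inl hC⟩
    obtain ⟨hp, hq, hm⟩ := hKey
    refine ⟨X 0 0, X 0 1, X 1 0, Y 0 0, Y 0 1, Y 1 0, ?_, ?_, ?_, ?_⟩
    · have hx : X 1 1 = -X 0 0 := by linarith
      rw [← hx]
      exact Matrix.eta_fin_two X
    · have hy : Y 1 1 = -Y 0 0 := by linarith
      rw [← hy]
      exact Matrix.eta_fin_two Y
    · linear_combination e00
    · rw [pair_li_iff]
      rcases hm with hm | hm | hm
      · refine ⟨1, 2, fun h => hm ?_⟩
        simp only [Matrix.cons_val_one, Matrix.head_cons, Matrix.cons_val_two,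
          Matrix.tail_cons, Matrix.cons_val_zero] at h
        exact_mod_cast h
      · refine ⟨0, 1, fun h => hm ?_⟩
        simp only [Matrix.cons_val_zero, Matrix.cons_val_one, Matrix.head_cons] at h
        exact_mod_cast h
      · refine ⟨0, 2, fun h => hm ?_⟩
        simp only [Matrix.cons_val_zero, Matrix.cons_val_one, Matrix.head_cons,
          Matrix.cons_val_two, Matrix.tail_cons] at h
        exact_mod_cast h
  · rintro ⟨t₁, t₂, t₃, s₁, s₂, s₃, hX, hY, hsum, hli⟩
    subst hX; subst hY
    constructor
    · ext i j
      fin_cases i <;> fin_cases j <;>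
        simp only [Fin.mk_zero, Fin.mk_one, Matrix.add_apply, Matrix.smul_apply, smul_eq_mul,
          pow_two, Matrix.mul_apply, Fin.sum_univ_two, Matrix.one_apply, Matrix.of_apply,
          Matrix.cons_val', Matrix.cons_val_zero, Matrix.cons_val_one, Matrix.head_cons,
          Matrix.empty_val', Matrix.cons_val_fin_one, Matrix.head_fin_const,
          if_true, if_false, one_ne_zero, zero_ne_one, ite_true, ite_false] <;>
        first
          | ring1
          | linear_combination hsum
    · intro hcomm
      have c00 := congrFun (congrFun hcomm 0) 0
      have c01 := congrFun (congrFun hcomm 0) 1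
      have c10 := congrFun (congrFun hcomm 1) 0
      simp only [Matrix.mul_apply, Fin.sum_univ_two] at c00 c01 c10
      norm_num at c00 c01 c10
      have m12 : t₂ * s₃ - t₃ * s₂ = 0 := by linear_combination c00
      have m01 : t₁ * s₂ - t₂ * s₁ = 0 := by linarith [c01]
      have m02 : t₁ * s₃ - t₃ * s₁ = 0 := by linarith [c10]
      rw [pair_li_iff] at hli
      obtain ⟨i, j, hij⟩ := hli
      have q12 : (t₂ : ℚ) * s₃ - t₃ * s₂ = 0 := by exact_mod_cast m12
      have q01 : (t₁ : ℚ) * s₂ - t₂ * s₁ = 0 := by exact_mod_cast m01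
      have q02 : (t₁ : ℚ) * s₃ - t₃ * s₁ = 0 := by exact_mod_cast m02
      apply hij
      fin_cases i <;> fin_cases j <;>
        (try simp only [Fin.mk_zero, Fin.mk_one, fin3_mk_two, Matrix.cons_val_zero,
          Matrix.cons_val_one, Matrix.head_cons, Matrix.cons_val_two, Matrix.tail_cons]) <;>
        first
          | ring1
          | linear_combination q01
          | linear_combination -q01
          | linear_combination q02
          | linear_combination -q02
          | linear_combination q12
          | linear_combination -q12
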